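/- For every integer a, the natural density of the set {n : s(n) = a} is 0; i.e., the number of i < 2^N with s(i) = a, divided by 2^N, tends to 0 as N → ∞. -/

import Mathlib

def s : ℕ → ℤ
  | 0 => 0
  | n + 1 =>
    if (n + 1) % 2 = 0 then -s ((n + 1) / 2)
    else s (n / 2) + 1
decreasing_by all_goals omega

lemma s_zero : s 0 = 0 := by simp [s]

lemma s_even (k : ℕ) : s (2 * k) = - s k := by
  cases k with
  | zero => simp [s]
  | succ m =>
    rw [show 2 * (m + 1) = (2 * m + 1) + 1 by ring, s]
    have h1 : (2 * m + 1 + 1) % 2 = 0 := by omega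
    have h2 : (2 * m + 1 + 1) / 2 = m + 1 := by omega
    rw [if_pos h1, h2]

lemma s_odd (k : ℕ) : s (2 * k + 1) = s k + 1 := by
  rw [show 2 * k + 1 = (2 * k) + 1 by ring, s]
  have h1 : ¬ (2 * k + 1) % 2 = 0 := by omega
  have h2 : (2 * k) / 2 = k := by omega
  rw [if_neg h1, h2]

lemma split_card (n : ℕ) (P : ℕ → Prop) [DecidablePred P] :
    ((Finset.range (2 * n)).filter P).card
      = ((Finset.range n).filter (fun k => P (2 * k))).card
      + ((Finset.range n).filter (fun k => P (2 * k + 1))).card := by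
  induction n with
  | zero => simp
  | succ m ih =>
    rw [show 2 * (m + 1) = (2 * m + 1) + 1 by ring, Finset.range_add_one, Finset.range_add_one,
      Finset.range_add_one, Finset.filter_insert, Finset.filter_insert, Finset.filter_insert,
      Finset.filter_insert]
    have h1 : 2 * m + 1 ∉ Finset.range (2 * m) := by simp
    have h2 : 2 * m ∉ (Finset.range (2 * m)).filter P := by simp
    have h3 : m ∉ (Finset.range m).filter (fun k => P (2 * k)) := by simp
    have h4 : m ∉ (Finset.range m).filter (fun k => P (2 * k + 1)) := by simp
    split_ifs with ha hb hb <;>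
      first
        | (simp [Finset.filter_insert, ha, hb, Finset.card_insert_of_notMem, h2, h3, h4,
            Finset.mem_insert, h1]; rw [ih]; ring)
        | exact ih

def c (N : ℕ) (a : ℤ) : ℕ :=
  ((Finset.range (2 ^ N)).filter (fun i => s i = a)).card

lemma c_rec (N : ℕ) (a : ℤ) : c (N + 1) a = c N (-a) + c N (a - 1) := by
  unfold c
  rw [show (2 : ℕ) ^ (N + 1) = 2 * 2 ^ N by ring, split_card]
  congr 1
  · apply congrArg
    apply Finset.filter_congr
    intro x _
    rw [s_even]
    constructor <;> intro h <;> omega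
  · apply congrArg
    apply Finset.filter_congr
    intro x _
    rw [s_odd]
    constructor <;> intro h <;> omega

lemma c_zero (b : ℤ) : c 0 b = if b = 0 then 1 else 0 := by
  unfold c
  rw [show (2:ℕ)^0 = 1 from rfl, Finset.range_one, Finset.filter_singleton, s_zero]
  by_cases hb : b = 0 <;> simp [hb, eq_comm]

lemma natId (N j : ℕ) : (N + 1).choose (j / 2)
    = (if j ≤ 2 * N + 1 then N.choose ((2 * N + 1 - j) / 2) else 0)
    + (if 2 ≤ j then N.choose ((j - 2) / 2) else 0) := by
  by_cases h2 : 2 ≤ j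
  · rw [if_pos h2]
    have hm1 : 1 ≤ j / 2 := by omega
    have h3 : (j - 2) / 2 = j / 2 - 1 := by omega
    rw [h3]
    by_cases hle : j ≤ 2 * N + 1
    · rw [if_pos hle]
      have hmN : j / 2 ≤ N := by omega
      have h4 : (2 * N + 1 - j) / 2 = N - j / 2 := by omega
      rw [h4, Nat.choose_symm hmN]
      obtain ⟨m', hm'⟩ : ∃ m', j / 2 = m' + 1 := ⟨j / 2 - 1, by omega⟩
      rw [hm', Nat.choose_succ_succ, Nat.add_sub_cancel, Nat.add_comm]
    · rw [if_neg hle]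
      by_cases he : j / 2 = N + 1
      · rw [he]
        simp [Nat.choose_self]
      · have hlt : N + 1 < j / 2 := by omega
        rw [Nat.choose_eq_zero_of_lt hlt, Nat.choose_eq_zero_of_lt (by omega : N < j / 2 - 1)]
  · rw [if_neg h2, if_pos (by omega : j ≤ 2 * N + 1)]
    have h0 : j / 2 = 0 := by omega
    have h4 : (2 * N + 1 - j) / 2 = N := by omega
    rw [h0, h4]
    simp [Nat.choose_self]

lemma c_formula : ∀ (N : ℕ) (a : ℤ),
    c (N + 1) a = if 0 ≤ a + N then N.choose ((a + N).toNat / 2) else 0 := by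
  intro N
  induction N with
  | zero =>
    intro a
    rw [c_rec, c_zero, c_zero]
    by_cases h0 : a = 0
    · subst h0; norm_num
    by_cases h1 : a = 1
    · subst h1; norm_num
    rcases lt_or_ge a 0 with h | h
    · rw [if_neg (show ¬ -a = 0 by omega), if_neg (show ¬ a - 1 = 0 by omega),
        if_neg (show ¬ (0:ℤ) ≤ a + ((0:ℕ):ℤ) from by push_cast; omega)]
    · rw [if_neg (show ¬ -a = 0 by omega), if_neg (show ¬ a - 1 = 0 by omega),
        if_pos (show (0:ℤ) ≤ a + ((0:ℕ):ℤ) from by push_cast; omega),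
        Nat.choose_eq_zero_of_lt (show 0 < (a + ((0:ℕ):ℤ)).toNat / 2 from by omega)]
  | succ N ih =>
    intro a
    rw [c_rec, ih, ih]
    by_cases hA : 0 ≤ a + ((N : ℤ) + 1)
    · have hj : ((a + N + 1).toNat : ℤ) = a + N + 1 := Int.toNat_of_nonneg (by omega)
      have hcast : (a + ((N + 1 : ℕ) : ℤ)).toNat = (a + N + 1).toNat := by push_cast; omega
      rw [if_pos (show (0:ℤ) ≤ a + ((N + 1 : ℕ) : ℤ) from by push_cast; omega),
        hcast, natId N ((a + N + 1).toNat)]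
      congr 1
      · by_cases h : (a + N + 1).toNat ≤ 2 * N + 1
        · rw [if_pos h, if_pos (show (0:ℤ) ≤ -a + N from by omega)]
          congr 1
          omega
        · rw [if_neg h, if_neg (show ¬ (0:ℤ) ≤ -a + N from by omega)]
      · by_cases h : 2 ≤ (a + N + 1).toNat
        · rw [if_pos h, if_pos (show (0:ℤ) ≤ a - 1 + N from by omega)]
          congr 1
          omega
        · rw [if_neg h, if_neg (show ¬ (0:ℤ) ≤ a - 1 + N from by omega)]
    · rw [if_neg (show ¬ (0:ℤ) ≤ a + ((N + 1 : ℕ) : ℤ) from by push_cast at hA ⊢; omega),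
        if_pos (show (0:ℤ) ≤ -a + N from by omega),
        if_neg (show ¬ (0:ℤ) ≤ a - 1 + N from by omega),
        Nat.choose_eq_zero_of_lt (show N < (-a + (N:ℤ)).toNat / 2 from by omega)]

lemma c_le (N : ℕ) (a : ℤ) : c (N + 1) a ≤ N.choose (N / 2) := by
  rw [c_formula]
  split_ifs
  · exact Nat.choose_le_middle _ _
  · exact Nat.zero_le _

lemma cb_sq (m : ℕ) : Nat.centralBinom m ^ 2 * (m + 1) ≤ 16 ^ m := by
  induction m with
  | zero => simp [Nat.centralBinom]
  | succ n ih =>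
    have key := Nat.succ_mul_centralBinom_succ n
    have h1 : Nat.centralBinom (n + 1) ^ 2 * (n + 1) ^ 2
        = 4 * (2 * n + 1) ^ 2 * Nat.centralBinom n ^ 2 := by
      calc Nat.centralBinom (n + 1) ^ 2 * (n + 1) ^ 2
          = ((n + 1) * Nat.centralBinom (n + 1)) ^ 2 := by ring
        _ = (2 * (2 * n + 1) * Nat.centralBinom n) ^ 2 := by rw [key]
        _ = _ := by ring
    have pos : 0 < (n + 1) ^ 3 := by positivity
    have step1 : Nat.centralBinom (n + 1) ^ 2 * (n + 2) * (n + 1) ^ 3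
        ≤ 16 ^ (n + 1) * (n + 1) ^ 3 := by
      calc Nat.centralBinom (n + 1) ^ 2 * (n + 2) * (n + 1) ^ 3
          = (Nat.centralBinom (n + 1) ^ 2 * (n + 1) ^ 2) * ((n + 2) * (n + 1)) := by ring
        _ = 4 * (2 * n + 1) ^ 2 * Nat.centralBinom n ^ 2 * ((n + 2) * (n + 1)) := by rw [h1]
        _ = (4 * (2 * n + 1) ^ 2 * (n + 2)) * (Nat.centralBinom n ^ 2 * (n + 1)) := by ring
        _ ≤ (4 * (2 * n + 1) ^ 2 * (n + 2)) * 16 ^ n := Nat.mul_le_mul_left _ ih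
        _ ≤ (16 * (n + 1) ^ 3) * 16 ^ n := Nat.mul_le_mul_right _ (by nlinarith)
        _ = 16 ^ (n + 1) * (n + 1) ^ 3 := by ring
    exact Nat.le_of_mul_le_mul_right step1 pos

lemma choose_half_sq (n : ℕ) : (n.choose (n / 2)) ^ 2 * (n + 2) ≤ 2 * 4 ^ n := by
  have h16 : ∀ m : ℕ, (16 : ℕ) ^ m = 4 ^ m * 4 ^ m := by
    intro m; rw [show (16 : ℕ) = 4 * 4 from rfl, mul_pow]
  rcases Nat.even_or_odd n with ⟨m, rfl⟩ | ⟨m, rfl⟩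
  · have h : (m + m) / 2 = m := by omega
    have hc : (m + m).choose m = Nat.centralBinom m := by
      unfold Nat.centralBinom; congr 1; ring
    rw [h, hc]
    have := cb_sq m
    calc Nat.centralBinom m ^ 2 * (m + m + 2) = (Nat.centralBinom m ^ 2 * (m + 1)) * 2 := by ring
      _ ≤ 16 ^ m * 2 := Nat.mul_le_mul_right _ this
      _ = 2 * 4 ^ (m + m) := by rw [h16, pow_add]; ring
  · have h : (2 * m + 1) / 2 = m := by omega
    rw [h]
    have hsym : (2 * m + 1).choose (m + 1) = (2 * m + 1).choose m := by
      have h5 := Nat.choose_symm (show m + 1 ≤ 2 * m + 1 by omega)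
      rw [show 2 * m + 1 - (m + 1) = m by omega] at h5
      exact h5.symm
    have hdouble : 2 * (2 * m + 1).choose m = Nat.centralBinom (m + 1) := by
      unfold Nat.centralBinom
      rw [show 2 * (m + 1) = (2 * m + 1) + 1 by ring,
        show (2 * m + 1) + 1 = (2 * m) + 1 + 1 from rfl, Nat.choose_succ_succ, hsym, two_mul]
    have hcb := cb_sq (m + 1)
    have h4 : (2 * m + 1).choose m ^ 2 * (4 * (m + 2)) ≤ 16 ^ (m + 1) := by
      calc (2 * m + 1).choose m ^ 2 * (4 * (m + 2))
          = (2 * (2 * m + 1).choose m) ^ 2 * (m + 2) := by ring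
        _ = Nat.centralBinom (m + 1) ^ 2 * (m + 1 + 1) := by rw [hdouble]
        _ ≤ 16 ^ (m + 1) := hcb
    -- goal : choose^2 * (2m+1+2) ≤ 2 * 4^(2m+1)
    have key : (2 * m + 1).choose m ^ 2 * (2 * m + 3) * 2 ≤ 2 * 4 ^ (2 * m + 1) * 2 := by
      calc (2 * m + 1).choose m ^ 2 * (2 * m + 3) * 2
          = (2 * m + 1).choose m ^ 2 * (4 * m + 6) := by ring
        _ ≤ (2 * m + 1).choose m ^ 2 * (4 * (m + 2)) := Nat.mul_le_mul_left _ (by omega)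
        _ ≤ 16 ^ (m + 1) := h4
        _ = 2 * 4 ^ (2 * m + 1) * 2 := by
            rw [h16, pow_succ, pow_add]
            ring
    have := Nat.le_of_mul_le_mul_right key (by norm_num)
    calc (2 * m + 1).choose m ^ 2 * (2 * m + 1 + 2)
        = (2 * m + 1).choose m ^ 2 * (2 * m + 3) := by ring
      _ ≤ 2 * 4 ^ (2 * m + 1) := this

lemma main_bound (N : ℕ) (a : ℤ) :
    (c N a : ℝ) / 2 ^ N ≤ Real.sqrt (2 / (N + 1)) := by
  cases N with
  | zero =>
    have h1 : c 0 a ≤ 1 := by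
      rw [c_zero]; split_ifs <;> norm_num
    have h2 : (1 : ℝ) ≤ Real.sqrt (2 / ((0 : ℕ) + 1)) := by
      rw [show ((0:ℕ):ℝ) + 1 = 1 by norm_num]
      rw [show (2 : ℝ) / 1 = 2 by norm_num]
      nlinarith [Real.sq_sqrt (show (0:ℝ) ≤ 2 by norm_num),
        Real.sqrt_nonneg 2]
    calc (c 0 a : ℝ) / 2 ^ 0 ≤ 1 := by
          rw [pow_zero, div_one]; exact_mod_cast h1
      _ ≤ _ := h2
  | succ n =>
    have h1 : c (n + 1) a ≤ n.choose (n / 2) := c_le n a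
    have h2 : (n.choose (n / 2)) ^ 2 * (n + 2) ≤ 2 * 4 ^ n := choose_half_sq n
    apply Real.le_sqrt_of_sq_le
    have hb : ((n.choose (n / 2) : ℝ)) ^ 2 * ((n : ℝ) + 2) ≤ 2 * 4 ^ n := by
      exact_mod_cast h2
    have hc : (c (n + 1) a : ℝ) ≤ (n.choose (n / 2) : ℝ) := by exact_mod_cast h1
    have hcpos : (0 : ℝ) ≤ (c (n + 1) a : ℝ) := by positivity
    have hp : ((2 : ℝ) ^ (n + 1)) ^ 2 = 4 * 4 ^ n := by
      rw [← pow_mul, show (n + 1) * 2 = 2 * n + 2 by ring,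
        show (4 : ℝ) = 2 ^ 2 by norm_num, ← pow_mul]
      ring_nf
    rw [div_pow, hp, div_le_div_iff₀ (by positivity) (by positivity)]
    have hcsq : (c (n + 1) a : ℝ) ^ 2 ≤ (n.choose (n / 2) : ℝ) ^ 2 := by nlinarith
    have hcast : ((n + 1 : ℕ) : ℝ) + 1 = (n : ℝ) + 2 := by push_cast; ring
    rw [hcast]
    nlinarith [pow_nonneg (show (0:ℝ) ≤ 4 by norm_num) n]

theorem stmt7 (a : ℤ) :
    Filter.Tendsto
      (fun N : ℕ => (((Finset.range (2 ^ N)).filter (fun i => s i = a)).card : ℝ) / 2 ^ N)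
      Filter.atTop (nhds 0) := by
  have hg : Filter.Tendsto (fun N : ℕ => Real.sqrt (2 / (N + 1))) Filter.atTop (nhds 0) := by
    have h0 : Filter.Tendsto (fun N : ℕ => 2 / ((N : ℝ) + 1)) Filter.atTop (nhds 0) := by
      have := (tendsto_const_div_atTop_nhds_zero_nat (2 : ℝ)).comp (Filter.tendsto_add_atTop_nat 1)
      convert this using 2 with n
      simp [Function.comp]
    have := h0.sqrt
    rwa [Real.sqrt_zero] at this
  apply squeeze_zero (fun N => by positivity) (fun N => main_bound N a) hg
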